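/- Fix ρ ∈ [-1,1], c₊, c₋ ∈ ℝ, and p > 0. For each natural number n ≥ 1 let s₊ = 1 + c₊/nᵖ, s₋ = 1 + c₋/nᵖ, let φ_{s,n}(x) = s₊·max(x,0) + s₋·min(x,0), let cₙ = ( E[φ_{s,n}(g)²] )⁻¹, and let K₁,ₙ(ρ) = E[φ_{s,n}(g)·φ_{s,n}(ĝ)], where g, w are independent standard Gaussians and ĝ = ρg + √(1-ρ²)·w. Then lim_{n→∞} n^{2p} · ( cₙ·K₁,ₙ(ρ) − ρ ) = ((c₊ − c₋)²/(2π)) · ( √(1-ρ²) − ρ·arccos ρ ). -/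

import Mathlib

open MeasureTheory ProbabilityTheory Real Filter
open Set Topology
open scoped NNReal ENNReal

/-- The shaped (leaky) ReLU with positive slope `sp` and negative slope `sm`. -/
noncomputable def shapedReLU (sp sm x : ℝ) : ℝ := sp * max x 0 + sm * min x 0

/-!aux-/
noncomputable def gd : ℝ → ℝ≥0 := fun x => (gaussianPDFReal 0 1 x).toNNReal

lemma gd_meas : Measurable gd := (measurable_gaussianPDFReal 0 1).real_toNNReal

lemma gd_coe (x : ℝ) : (gd x : ℝ) = (Real.sqrt (2*π))⁻¹ * rexp (-x^2/2) := by
  have h := gaussianPDFReal_nonneg 0 1 x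
  rw [gd, Real.coe_toNNReal _ h]
  simp [gaussianPDFReal]

lemma integral_gauss (f : ℝ → ℝ) :
    ∫ x, f x ∂(gaussianReal 0 1) = ∫ x, (gd x : ℝ) * f x := by
  rw [gaussianReal_of_var_ne_zero 0 one_ne_zero, gaussianPDF_def]
  have h : (fun x => ENNReal.ofReal (gaussianPDFReal 0 1 x)) = (fun x => ((gd x : ℝ≥0) : ℝ≥0∞)) := rfl
  rw [h, integral_withDensity_eq_integral_smul gd_meas]
  simp [NNReal.smul_def]

lemma gauss_prod_eq : (gaussianReal 0 1).prod (gaussianReal 0 1)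
    = (volume : Measure (ℝ × ℝ)).withDensity (fun z => ((gd z.1 * gd z.2 : ℝ≥0) : ℝ≥0∞)) := by
  rw [Measure.volume_eq_prod, gaussianReal_of_var_ne_zero 0 one_ne_zero, gaussianPDF_def]
  have h : (fun x => ENNReal.ofReal (gaussianPDFReal 0 1 x)) = (fun x => ((gd x : ℝ≥0) : ℝ≥0∞)) := rfl
  rw [h]
  refine Measure.prod_eq fun s t hs ht => ?_
  rw [withDensity_apply _ (hs.prod ht), ← Measure.prod_restrict]
  simp only [ENNReal.coe_mul]
  rw [MeasureTheory.lintegral_prod_mul (gd_meas.coe_nnreal_ennreal.aemeasurable)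
      (gd_meas.coe_nnreal_ennreal.aemeasurable),
    withDensity_apply _ hs, withDensity_apply _ ht]

lemma integral_gauss_prod (f : ℝ × ℝ → ℝ) :
    ∫ q, f q ∂((gaussianReal 0 1).prod (gaussianReal 0 1))
      = ∫ q : ℝ × ℝ, ((gd q.1 : ℝ) * (gd q.2 : ℝ)) * f q := by
  have hm : Measurable fun z : ℝ × ℝ => gd z.1 * gd z.2 :=
    (gd_meas.comp measurable_fst).mul (gd_meas.comp measurable_snd)
  rw [gauss_prod_eq, integral_withDensity_eq_integral_smul hm]
  simp [NNReal.smul_def]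

lemma radial_integral : ∫ r in Ioi (0:ℝ), r^3 * rexp (-r^2/2) = 2 := by
  have hderiv : ∀ x ∈ Ici (0:ℝ),
      HasDerivAt (fun r : ℝ => -(r^2+2) * rexp (-r^2/2)) (x^3 * rexp (-x^2/2)) x := by
    intro x _
    have h1 : HasDerivAt (fun r : ℝ => -(r^2+2)) (-(2*x)) x := by
      have := ((hasDerivAt_pow 2 x).add_const 2).neg
      exact this.congr_deriv (by norm_num)
    have h0 : HasDerivAt (fun r : ℝ => -r^2/2) (-x) x := by
      have := ((hasDerivAt_pow 2 x).neg.div_const 2)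
      simpa using this.congr_deriv (by ring)
    have h2 : HasDerivAt (fun r : ℝ => rexp (-r^2/2)) (rexp (-x^2/2) * (-x)) x := h0.exp
    have : HasDerivAt (fun r : ℝ => -(r^2+2) * rexp (-r^2/2)) _ x := h1.mul h2
    convert this using 1
    ring
  have hint : IntegrableOn (fun r : ℝ => r^3 * rexp (-r^2/2)) (Ioi 0) := by
    have h := integrableOn_rpow_mul_exp_neg_mul_sq (b := 1/2) one_half_pos (s := 3) (by norm_num)
    refine h.congr_fun (fun x hx => ?_) measurableSet_Ioi
    dsimp only
    rw [show (3:ℝ) = ((3:ℕ):ℝ) by norm_num, Real.rpow_natCast]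
    congr 1
    ring
  have htend : Tendsto (fun r : ℝ => -(r^2+2) * rexp (-r^2/2)) atTop (𝓝 0) := by
    have A : Tendsto (fun u : ℝ => -(2*u+2) * rexp (-u)) atTop (𝓝 0) := by
      have h1 := (Real.tendsto_pow_mul_exp_neg_atTop_nhds_zero 1).const_mul (-2)
      have h2 := Real.tendsto_exp_neg_atTop_nhds_zero.const_mul (-2)
      have := h1.add h2
      simp only [mul_zero, add_zero] at this
      refine this.congr fun u => ?_
      ring
    have B : Tendsto (fun r : ℝ => r^2/2) atTop atTop :=
      (tendsto_pow_atTop two_ne_zero).atTop_div_const (by norm_num)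
    have := A.comp B
    refine this.congr fun r => ?_
    simp only [Function.comp_apply]
    ring_nf
  have := MeasureTheory.integral_Ioi_of_hasDerivAt_of_tendsto' hderiv hint htend
  rw [this]
  norm_num

lemma polar_pipeline (f : ℝ × ℝ → ℝ) (G : ℝ → ℝ)
    (hfG : ∀ r θ : ℝ, 0 < r → f (r * Real.cos θ, r * Real.sin θ) = r^2 * G θ) :
    ∫ q, f q ∂((gaussianReal 0 1).prod (gaussianReal 0 1))
      = π⁻¹ * ∫ θ in (-π)..π, G θ := by
  rw [integral_gauss_prod]
  rw [← integral_comp_polarCoord_symm (fun q => ((gd q.1 : ℝ) * (gd q.2 : ℝ)) * f q)]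
  have htarget : polarCoord.target = Ioi (0:ℝ) ×ˢ Ioo (-π) π := rfl
  have key : ∀ p ∈ (Ioi (0:ℝ) ×ˢ Ioo (-π) π),
      p.1 • ((fun q => ((gd q.1 : ℝ) * (gd q.2 : ℝ)) * f q) (polarCoord.symm p))
        = (2*π)⁻¹ * ((p.1^3 * rexp (-p.1^2/2)) * G p.2) := by
    rintro ⟨r, θ⟩ ⟨hr, -⟩
    have hr' : (0:ℝ) < r := hr
    have hsymm : polarCoord.symm (r, θ) = (r * Real.cos θ, r * Real.sin θ) := rfl
    rw [hsymm]
    dsimp only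
    rw [gd_coe, gd_coe, hfG r θ hr']
    have hexp : rexp (-(r * Real.cos θ)^2/2) * rexp (-(r * Real.sin θ)^2/2)
        = rexp (-r^2/2) := by
      rw [← Real.exp_add]
      congr 1
      have h := Real.sin_sq_add_cos_sq θ
      nlinarith [h]
    have hsq : (Real.sqrt (2*π))⁻¹ * (Real.sqrt (2*π))⁻¹ = (2*π)⁻¹ := by
      rw [← mul_inv, Real.mul_self_sqrt (by positivity)]
    calc r • ((Real.sqrt (2*π))⁻¹ * rexp (-(r * Real.cos θ)^2/2)
          * ((Real.sqrt (2*π))⁻¹ * rexp (-(r * Real.sin θ)^2/2)) * (r^2 * G θ))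
        = ((Real.sqrt (2*π))⁻¹ * (Real.sqrt (2*π))⁻¹)
            * (rexp (-(r * Real.cos θ)^2/2) * rexp (-(r * Real.sin θ)^2/2))
            * (r^3 * G θ) := by
          rw [smul_eq_mul]; ring
      _ = (2*π)⁻¹ * ((r^3 * rexp (-r^2/2)) * G θ) := by rw [hexp, hsq]; ring
  rw [htarget, setIntegral_congr_fun (measurableSet_Ioi.prod measurableSet_Ioo) key,
    MeasureTheory.integral_const_mul, Measure.volume_eq_prod,
    setIntegral_prod_mul (fun r : ℝ => r^3 * rexp (-r^2/2)) G, radial_integral,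
    ← integral_Ioc_eq_integral_Ioo,
    ← intervalIntegral.integral_of_le (by linarith [pi_pos] : -π ≤ π)]
  ring

lemma Hprim (α u v : ℝ) : ∫ θ in u..v, Real.cos θ * Real.cos (θ - α) =
    (Real.sin (2*v-α)/4 + v * Real.cos α/2) - (Real.sin (2*u-α)/4 + u * Real.cos α/2) := by
  apply intervalIntegral.integral_eq_sub_of_hasDerivAt
  · intro x _
    have h1 : HasDerivAt (fun θ : ℝ => 2*θ-α) 2 x := by
      simpa using ((hasDerivAt_id x).const_mul 2).sub_const α
    have h2 : HasDerivAt (fun θ : ℝ => Real.sin (2*θ-α)) (Real.cos (2*x-α)*2) x :=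
      (Real.hasDerivAt_sin (2*x-α)).comp (h₂ := Real.sin) x h1
    have h3 : HasDerivAt (fun θ : ℝ => Real.sin (2*θ-α)/4 + θ * Real.cos α/2)
        (Real.cos (2*x-α)*2/4 + 1 * Real.cos α/2) x := by
      exact (h2.div_const 4).add (((hasDerivAt_id x).mul_const (Real.cos α)).div_const 2)
    refine h3.congr_deriv ?_
    have e1 : Real.cos (2*x-α) = Real.cos x * Real.cos (x-α) - Real.sin x * Real.sin (x-α) := by
      rw [show 2*x-α = x + (x-α) by ring, Real.cos_add]
    have e2 : Real.cos α = Real.cos x * Real.cos (x-α) + Real.sin x * Real.sin (x-α) := by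
      have h := Real.cos_sub x (x-α)
      rw [show x - (x-α) = α by ring] at h
      linarith
    linarith
  · exact (Real.continuous_cos.mul (Real.continuous_cos.comp
      (continuous_id.sub continuous_const))).intervalIntegrable _ _

lemma angular_one (α : ℝ) :
    ∫ θ in (-π)..π, Real.cos θ * Real.cos (θ - α) = π * Real.cos α := by
  rw [Hprim, show 2*π-α = (-α) + 2*π by ring, show 2*(-π)-α = (-α) - 2*π by ring,
    Real.sin_add_two_pi, Real.sin_sub_two_pi]
  ring

lemma angular_mixed_aux {f : ℝ → ℝ} (hc : Continuous f)
    (hf : ∀ θ, f (θ - π) = - f θ) : ∫ θ in (-π)..π, f θ = 0 := by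
  have hi : ∀ u v : ℝ, IntervalIntegrable f volume u v := fun u v => hc.intervalIntegrable u v
  have hsplit := intervalIntegral.integral_add_adjacent_intervals (hi (-π) 0) (hi 0 π)
  have hsub := intervalIntegral.integral_comp_sub_right f π (a := 0) (b := π)
  rw [show (0:ℝ) - π = -π by ring, show π - π = (0:ℝ) by ring] at hsub
  have : ∫ θ in (0:ℝ)..π, f (θ - π) = ∫ θ in (0:ℝ)..π, -f θ := by
    refine intervalIntegral.integral_congr fun θ _ => hf θ
  rw [this, intervalIntegral.integral_neg] at hsub
  linarith

lemma angular_mixed₁ (α : ℝ) :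
    ∫ θ in (-π)..π, Real.cos θ * |Real.cos (θ - α)| = 0 := by
  refine angular_mixed_aux ?_ fun θ => ?_
  · exact Real.continuous_cos.mul (Real.continuous_cos.comp
      (continuous_id.sub continuous_const)).abs
  · rw [Real.cos_sub_pi, show θ - π - α = (θ - α) - π by ring, Real.cos_sub_pi, abs_neg]
    ring

lemma angular_mixed₂ (α : ℝ) :
    ∫ θ in (-π)..π, |Real.cos θ| * Real.cos (θ - α) = 0 := by
  refine angular_mixed_aux ?_ fun θ => ?_
  · exact Real.continuous_cos.abs.mul (Real.continuous_cos.comp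
      (continuous_id.sub continuous_const))
  · rw [Real.cos_sub_pi, show θ - π - α = (θ - α) - π by ring, Real.cos_sub_pi, abs_neg]
    ring

lemma angular_abs_of_le (α : ℝ) (h0 : 0 ≤ α) (h2 : α ≤ π/2) :
    ∫ θ in (-π)..π, |Real.cos θ * Real.cos (θ - α)|
      = 2 * Real.sin α + (π - 2*α) * Real.cos α := by
  have pi_pos := Real.pi_pos
  set f : ℝ → ℝ := fun θ => |Real.cos θ * Real.cos (θ - α)| with hf
  have hc : Continuous f := (Real.continuous_cos.mul (Real.continuous_cos.comp
      (continuous_id.sub continuous_const))).abs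
  have hi : ∀ u v : ℝ, IntervalIntegrable f volume u v := fun u v => hc.intervalIntegrable u v
  -- splitting points
  have s1 := intervalIntegral.integral_add_adjacent_intervals (hi (-π) (-(π/2))) (hi (-(π/2)) (α-π/2))
  have s2 := intervalIntegral.integral_add_adjacent_intervals (hi (-π) (α-π/2)) (hi (α-π/2) (π/2))
  have s3 := intervalIntegral.integral_add_adjacent_intervals (hi (-π) (π/2)) (hi (π/2) (α+π/2))
  have s4 := intervalIntegral.integral_add_adjacent_intervals (hi (-π) (α+π/2)) (hi (α+π/2) π)
  -- sign information
  have negcos : ∀ x : ℝ, -(π+π/2) ≤ x → x ≤ -(π/2) → Real.cos x ≤ 0 := by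
    intro x hx1 hx2
    rw [← Real.cos_neg]
    exact Real.cos_nonpos_of_pi_div_two_le_of_le (by linarith) (by linarith)
  have p1 : ∫ θ in (-π)..(-(π/2)), f θ
      = ∫ θ in (-π)..(-(π/2)), Real.cos θ * Real.cos (θ - α) := by
    refine intervalIntegral.integral_congr fun θ hθ => ?_
    rw [Set.uIcc_of_le (by linarith)] at hθ
    have hcθ : Real.cos θ ≤ 0 := negcos θ (by linarith [hθ.1]) (by linarith [hθ.2])
    have hcθα : Real.cos (θ - α) ≤ 0 := negcos (θ - α) (by linarith [hθ.1]) (by linarith [hθ.2])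
    exact abs_of_nonneg (by nlinarith [mul_nonneg (neg_nonneg.2 hcθ) (neg_nonneg.2 hcθα)])
  have p2 : ∫ θ in (-(π/2))..(α-π/2), f θ
      = ∫ θ in (-(π/2))..(α-π/2), -(Real.cos θ * Real.cos (θ - α)) := by
    refine intervalIntegral.integral_congr fun θ hθ => ?_
    rw [Set.uIcc_of_le (by linarith)] at hθ
    have hcθ : 0 ≤ Real.cos θ :=
      Real.cos_nonneg_of_mem_Icc ⟨by linarith [hθ.1], by linarith [hθ.2]⟩
    have hcθα : Real.cos (θ - α) ≤ 0 := negcos (θ - α) (by linarith [hθ.1]) (by linarith [hθ.2])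
    exact abs_of_nonpos (by nlinarith [mul_nonneg hcθ (neg_nonneg.2 hcθα)])
  have p3 : ∫ θ in (α-π/2)..(π/2), f θ
      = ∫ θ in (α-π/2)..(π/2), Real.cos θ * Real.cos (θ - α) := by
    refine intervalIntegral.integral_congr fun θ hθ => ?_
    rw [Set.uIcc_of_le (by linarith)] at hθ
    have hcθ : 0 ≤ Real.cos θ :=
      Real.cos_nonneg_of_mem_Icc ⟨by linarith [hθ.1], by linarith [hθ.2]⟩
    have hcθα : 0 ≤ Real.cos (θ - α) :=
      Real.cos_nonneg_of_mem_Icc ⟨by linarith [hθ.1], by linarith [hθ.2]⟩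
    exact abs_of_nonneg (mul_nonneg hcθ hcθα)
  have p4 : ∫ θ in (π/2)..(α+π/2), f θ
      = ∫ θ in (π/2)..(α+π/2), -(Real.cos θ * Real.cos (θ - α)) := by
    refine intervalIntegral.integral_congr fun θ hθ => ?_
    rw [Set.uIcc_of_le (by linarith)] at hθ
    have hcθ : Real.cos θ ≤ 0 :=
      Real.cos_nonpos_of_pi_div_two_le_of_le (by linarith [hθ.1]) (by linarith [hθ.2])
    have hcθα : 0 ≤ Real.cos (θ - α) :=
      Real.cos_nonneg_of_mem_Icc ⟨by linarith [hθ.1], by linarith [hθ.2]⟩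
    exact abs_of_nonpos (by nlinarith [mul_nonneg (neg_nonneg.2 hcθ) hcθα])
  have p5 : ∫ θ in (α+π/2)..π, f θ
      = ∫ θ in (α+π/2)..π, Real.cos θ * Real.cos (θ - α) := by
    refine intervalIntegral.integral_congr fun θ hθ => ?_
    rw [Set.uIcc_of_le (by linarith)] at hθ
    have hcθ : Real.cos θ ≤ 0 :=
      Real.cos_nonpos_of_pi_div_two_le_of_le (by linarith [hθ.1]) (by linarith [hθ.2])
    have hcθα : Real.cos (θ - α) ≤ 0 :=
      Real.cos_nonpos_of_pi_div_two_le_of_le (by linarith [hθ.1]) (by linarith [hθ.2])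
    exact abs_of_nonneg (by nlinarith [mul_nonneg (neg_nonneg.2 hcθ) (neg_nonneg.2 hcθα)])
  have q2 : ∫ θ in (-(π/2))..(α-π/2), -(Real.cos θ * Real.cos (θ - α))
      = -∫ θ in (-(π/2))..(α-π/2), Real.cos θ * Real.cos (θ - α) :=
    intervalIntegral.integral_neg
  have q4 : ∫ θ in (π/2)..(α+π/2), -(Real.cos θ * Real.cos (θ - α))
      = -∫ θ in (π/2)..(α+π/2), Real.cos θ * Real.cos (θ - α) :=
    intervalIntegral.integral_neg
  have e1 := Hprim α (-π) (-(π/2))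
  have e2 := Hprim α (-(π/2)) (α-π/2)
  have e3 := Hprim α (α-π/2) (π/2)
  have e4 := Hprim α (π/2) (α+π/2)
  have e5 := Hprim α (α+π/2) π
  rw [show 2*(-π)-α = (-α) - 2*π by ring, Real.sin_sub_two_pi] at e1
  rw [show 2*(-(π/2))-α = -(α+π) by ring, Real.sin_neg, Real.sin_add_pi] at e1 e2
  rw [show 2*(α-π/2)-α = α - π by ring, Real.sin_sub_pi] at e2 e3
  rw [show 2*(π/2)-α = π - α by ring, Real.sin_pi_sub] at e3 e4
  rw [show 2*(α+π/2)-α = α + π by ring, Real.sin_add_pi] at e4 e5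
  rw [show 2*π-α = (-α) + 2*π by ring, Real.sin_add_two_pi] at e5
  rw [Real.sin_neg] at e1 e5
  rw [← s4, ← s3, ← s2, ← s1, p1, p2, q2, p3, p4, q4, p5, e1, e2, e3, e4, e5]
  ring

lemma angular_abs (α : ℝ) (h0 : 0 ≤ α) (h1 : α ≤ π) :
    ∫ θ in (-π)..π, |Real.cos θ * Real.cos (θ - α)|
      = 2 * Real.sin α + (π - 2*α) * Real.cos α := by
  rcases le_or_gt α (π/2) with h | h
  · exact angular_abs_of_le α h0 h
  · set β := π - α with hβ
    have key := angular_abs_of_le β (by simp [hβ]; linarith) (by simp [hβ]; linarith)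
    have refl : ∫ θ in (-π)..π, |Real.cos θ * Real.cos (θ - α)|
        = ∫ θ in (-π)..π, |Real.cos θ * Real.cos (θ - β)| := by
      have h2 : ∫ θ in (-π)..π, (fun x => |Real.cos x * Real.cos (x - β)|) (-θ)
          = ∫ θ in (-π)..π, |Real.cos θ * Real.cos (θ - β)| := by
        rw [intervalIntegral.integral_comp_neg (fun x => |Real.cos x * Real.cos (x - β)|)]
        norm_num
      rw [← h2]
      refine intervalIntegral.integral_congr fun θ _ => ?_
      dsimp only
      have e1 : Real.cos (-θ - β) = -Real.cos (θ - α) := by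
        rw [show -θ - β = -((θ - α) + π) by rw [hβ]; ring, Real.cos_neg, Real.cos_add_pi]
      rw [Real.cos_neg, e1]
      rw [show Real.cos θ * -Real.cos (θ-α) = -(Real.cos θ * Real.cos (θ-α)) by ring, abs_neg]
    rw [refl, key, hβ, Real.sin_pi_sub, Real.cos_pi_sub]
    ring

lemma shapedReLU_eq' (sp sm x : ℝ) :
    sp * max x 0 + sm * min x 0 = ((sp+sm)/2) * x + ((sp-sm)/2) * |x| := by
  rcases le_total 0 x with h | h
  · rw [max_eq_left h, min_eq_right h, abs_of_nonneg h]; ring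
  · rw [max_eq_right h, min_eq_left h, abs_of_nonpos h]; ring

lemma gauss_norm_integral (a b : ℝ) :
    ∫ x, (a * x + b * |x|)^2 ∂(gaussianReal 0 1) = a^2 + b^2 := by
  have h1 : ∫ x, (a * x + b * |x|)^2 ∂(gaussianReal 0 1)
      = ∫ q : ℝ × ℝ, (a * q.1 + b * |q.1|)^2
          ∂((gaussianReal 0 1).prod (gaussianReal 0 1)) := by
    rw [MeasureTheory.integral_fun_fst (f := fun x : ℝ => (a * x + b * |x|)^2)]
    simp
  rw [h1, polar_pipeline _ (fun θ => (a * Real.cos θ + b * |Real.cos θ|)^2)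
    (by intro r θ hr; dsimp only; rw [abs_mul, abs_of_pos hr]; ring)]
  have expand : ∀ θ : ℝ, (a * Real.cos θ + b * |Real.cos θ|)^2
      = (a^2+b^2) * |Real.cos θ * Real.cos (θ - 0)|
        + (2*a*b) * (Real.cos θ * |Real.cos (θ - 0)|) := by
    intro θ
    rw [sub_zero]
    have h := sq_abs (Real.cos θ)
    have h2 := abs_mul_self (Real.cos θ)
    linear_combination b^2 * h - (a^2+b^2) * h2
  have heq : ∫ θ in (-π)..π, (a * Real.cos θ + b * |Real.cos θ|)^2
      = ∫ θ in (-π)..π, ((a^2+b^2) * |Real.cos θ * Real.cos (θ - 0)|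
        + (2*a*b) * (Real.cos θ * |Real.cos (θ - 0)|)) :=
    intervalIntegral.integral_congr fun θ _ => expand θ
  have c1 : Continuous fun θ : ℝ => |Real.cos θ * Real.cos (θ - 0)| :=
    (Real.continuous_cos.mul (Real.continuous_cos.comp
      (continuous_id.sub continuous_const))).abs
  have c2 : Continuous fun θ : ℝ => Real.cos θ * |Real.cos (θ - 0)| :=
    Real.continuous_cos.mul (Real.continuous_cos.comp
      (continuous_id.sub continuous_const)).abs
  rw [heq, intervalIntegral.integral_add
      (((c1.intervalIntegrable _ _).const_mul _)) (((c2.intervalIntegrable _ _).const_mul _)),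
    intervalIntegral.integral_const_mul, intervalIntegral.integral_const_mul,
    angular_abs 0 le_rfl Real.pi_pos.le, angular_mixed₁ 0]
  have hπ : (π : ℝ) ≠ 0 := Real.pi_ne_zero
  field_simp
  simp only [Real.sin_zero, Real.cos_zero]; ring

lemma gauss_K1_integral (a b ρ : ℝ) (hρ1 : -1 ≤ ρ) (hρ2 : ρ ≤ 1) :
    ∫ q : ℝ × ℝ, (a * q.1 + b * |q.1|)
        * (a * (ρ * q.1 + Real.sqrt (1 - ρ^2) * q.2)
            + b * |ρ * q.1 + Real.sqrt (1 - ρ^2) * q.2|)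
        ∂((gaussianReal 0 1).prod (gaussianReal 0 1))
      = a^2 * ρ + b^2 * (π⁻¹ * (2 * Real.sqrt (1 - ρ^2)
          + (π - 2 * Real.arccos ρ) * ρ)) := by
  set α := Real.arccos ρ with hα
  set t := Real.sqrt (1 - ρ^2) with ht
  have hcos : Real.cos α = ρ := Real.cos_arccos hρ1 hρ2
  have hsin : Real.sin α = t := Real.sin_arccos ρ
  have hkey : ∀ θ : ℝ, ρ * Real.cos θ + t * Real.sin θ = Real.cos (θ - α) := by
    intro θ; rw [Real.cos_sub, hcos, hsin]; ring
  rw [polar_pipeline _ (fun θ => (a * Real.cos θ + b * |Real.cos θ|)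
      * (a * Real.cos (θ - α) + b * |Real.cos (θ - α)|)) ?hfg]
  case hfg =>
    intro r θ hr
    dsimp only
    have h2 : ρ * (r * Real.cos θ) + t * (r * Real.sin θ) = r * Real.cos (θ - α) := by
      rw [← hkey θ]; ring
    rw [h2, abs_mul, abs_mul, abs_of_pos hr]
    ring
  have expand : ∀ θ : ℝ, (a * Real.cos θ + b * |Real.cos θ|)
        * (a * Real.cos (θ - α) + b * |Real.cos (θ - α)|)
      = (a^2 * (Real.cos θ * Real.cos (θ - α)) + (a*b) * (Real.cos θ * |Real.cos (θ - α)|))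
        + ((a*b) * (|Real.cos θ| * Real.cos (θ - α))
            + b^2 * |Real.cos θ * Real.cos (θ - α)|) := by
    intro θ; rw [abs_mul]; ring
  have heq : ∫ θ in (-π)..π, (a * Real.cos θ + b * |Real.cos θ|)
        * (a * Real.cos (θ - α) + b * |Real.cos (θ - α)|)
      = ∫ θ in (-π)..π,
          ((a^2 * (Real.cos θ * Real.cos (θ - α)) + (a*b) * (Real.cos θ * |Real.cos (θ - α)|))
        + ((a*b) * (|Real.cos θ| * Real.cos (θ - α))
            + b^2 * |Real.cos θ * Real.cos (θ - α)|)) :=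
    intervalIntegral.integral_congr fun θ _ => expand θ
  have cc : Continuous fun θ : ℝ => Real.cos (θ - α) :=
    Real.continuous_cos.comp (continuous_id.sub continuous_const)
  have c0 : Continuous fun θ : ℝ => Real.cos θ * Real.cos (θ - α) :=
    Real.continuous_cos.mul cc
  have c1 : Continuous fun θ : ℝ => Real.cos θ * |Real.cos (θ - α)| :=
    Real.continuous_cos.mul cc.abs
  have c2 : Continuous fun θ : ℝ => |Real.cos θ| * Real.cos (θ - α) :=
    Real.continuous_cos.abs.mul cc
  have c3 : Continuous fun θ : ℝ => |Real.cos θ * Real.cos (θ - α)| := c0.abs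
  rw [heq, intervalIntegral.integral_add
      (Continuous.intervalIntegrable (u := fun θ => a^2 * (Real.cos θ * Real.cos (θ - α))
        + (a*b) * (Real.cos θ * |Real.cos (θ - α)|))
        ((continuous_const.mul c0).add (continuous_const.mul c1)) _ _)
      (Continuous.intervalIntegrable (u := fun θ => (a*b) * (|Real.cos θ| * Real.cos (θ - α))
        + b^2 * |Real.cos θ * Real.cos (θ - α)|)
        ((continuous_const.mul c2).add (continuous_const.mul c3)) _ _),
    intervalIntegral.integral_add ((c0.intervalIntegrable _ _).const_mul _)
      ((c1.intervalIntegrable _ _).const_mul _),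
    intervalIntegral.integral_add ((c2.intervalIntegrable _ _).const_mul _)
      ((c3.intervalIntegrable _ _).const_mul _),
    intervalIntegral.integral_const_mul, intervalIntegral.integral_const_mul,
    intervalIntegral.integral_const_mul, intervalIntegral.integral_const_mul,
    angular_one α, angular_mixed₁ α, angular_mixed₂ α,
    angular_abs α (Real.arccos_nonneg ρ) (Real.arccos_le_pi ρ), hcos, hsin]
  have hπ : (π : ℝ) ≠ 0 := Real.pi_ne_zero
  field_simp
  ring


/-- with `s± = 1 + c±/nᵖ`, `cₙ⁻¹ = E[φ_{s,n}(g)²]` and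
`K₁,ₙ(ρ) = E[φ_{s,n}(g) φ_{s,n}(ĝ)]` (for `g, w` independent standard Gaussians
and `ĝ = ρg + √(1-ρ²) w`), we have
`n^{2p} (cₙ K₁,ₙ(ρ) − ρ) → ((c₊−c₋)²/(2π))(√(1-ρ²) − ρ arccos ρ)` as `n → ∞`. -/
theorem shaped_relu_drift_limit (ρ cp cm p : ℝ) (hρ : ρ ∈ Set.Icc (-1 : ℝ) 1)
    (hp : 0 < p) :
    Tendsto
      (fun n : ℕ =>
        (n : ℝ) ^ (2 * p) *
          ((∫ x : ℝ, (shapedReLU (1 + cp / (n : ℝ) ^ p) (1 + cm / (n : ℝ) ^ p) x) ^ 2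
              ∂(gaussianReal 0 1))⁻¹ *
            (∫ q : ℝ × ℝ,
                shapedReLU (1 + cp / (n : ℝ) ^ p) (1 + cm / (n : ℝ) ^ p) q.1 *
                  shapedReLU (1 + cp / (n : ℝ) ^ p) (1 + cm / (n : ℝ) ^ p)
                    (ρ * q.1 + Real.sqrt (1 - ρ ^ 2) * q.2)
              ∂((gaussianReal 0 1).prod (gaussianReal 0 1))) - ρ))
      atTop
      (nhds ((cp - cm) ^ 2 / (2 * π) * (Real.sqrt (1 - ρ ^ 2) - ρ * Real.arccos ρ))) := by
  obtain ⟨hρ1, hρ2⟩ := hρ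
  set J : ℝ := π⁻¹ * (2 * Real.sqrt (1 - ρ^2) + (π - 2 * Real.arccos ρ) * ρ) with hJ
  set D : ℕ → ℝ := fun n => ((1 + cp / (n:ℝ)^p + (1 + cm / (n:ℝ)^p))/2)^2
      + ((1 + cp / (n:ℝ)^p - (1 + cm / (n:ℝ)^p))/2)^2 with hD_def
  set G : ℕ → ℝ := fun n => (cp - cm)^2/4 * (J - ρ) * (D n)⁻¹ with hG_def
  have hnat : Tendsto (fun n : ℕ => (n:ℝ)^p) atTop atTop :=
    (tendsto_rpow_atTop hp).comp tendsto_natCast_atTop_atTop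
  have hcp : Tendsto (fun n : ℕ => cp / (n:ℝ)^p) atTop (𝓝 0) :=
    tendsto_const_nhds.div_atTop hnat
  have hcm : Tendsto (fun n : ℕ => cm / (n:ℝ)^p) atTop (𝓝 0) :=
    tendsto_const_nhds.div_atTop hnat
  have hf : Tendsto (fun n : ℕ => 1 + cp / (n:ℝ)^p) atTop (𝓝 (1+0)) := hcp.const_add 1
  have hg : Tendsto (fun n : ℕ => 1 + cm / (n:ℝ)^p) atTop (𝓝 (1+0)) := hcm.const_add 1
  rw [add_zero] at hf hg
  have hD : Tendsto D atTop (𝓝 ((((1:ℝ)+1)/2)^2 + (((1:ℝ)-1)/2)^2)) :=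
    (((hf.add hg).div_const 2).pow 2).add (((hf.sub hg).div_const 2).pow 2)
  rw [show ((((1:ℝ)+1)/2)^2 + (((1:ℝ)-1)/2)^2) = 1 by norm_num] at hD
  have hG : Tendsto G atTop (𝓝 ((cp - cm)^2/4 * (J - ρ) * 1⁻¹)) :=
    tendsto_const_nhds.mul (hD.inv₀ one_ne_zero)
  rw [show ((cp - cm)^2/4 * (J - ρ) * 1⁻¹) = (cp - cm)^2/4 * (J - ρ) by norm_num] at hG
  have hval : (cp - cm)^2/4 * (J - ρ)
      = (cp - cm)^2 / (2*π) * (Real.sqrt (1 - ρ^2) - ρ * Real.arccos ρ) := by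
    rw [hJ]
    have hπ : (π : ℝ) ≠ 0 := Real.pi_ne_zero
    field_simp
    ring
  have hEq : (fun n : ℕ =>
        (n : ℝ) ^ (2 * p) *
          ((∫ x : ℝ, (shapedReLU (1 + cp / (n : ℝ) ^ p) (1 + cm / (n : ℝ) ^ p) x) ^ 2
              ∂(gaussianReal 0 1))⁻¹ *
            (∫ q : ℝ × ℝ,
                shapedReLU (1 + cp / (n : ℝ) ^ p) (1 + cm / (n : ℝ) ^ p) q.1 *
                  shapedReLU (1 + cp / (n : ℝ) ^ p) (1 + cm / (n : ℝ) ^ p)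
                    (ρ * q.1 + Real.sqrt (1 - ρ ^ 2) * q.2)
              ∂((gaussianReal 0 1).prod (gaussianReal 0 1))) - ρ)) =ᶠ[atTop] G := by
    filter_upwards [hD.eventually_ne one_ne_zero, eventually_ge_atTop 1] with n hDn hn1
    have hn0 : (0:ℝ) ≤ (n:ℝ) := Nat.cast_nonneg n
    have hnpos : (0:ℝ) < (n:ℝ) := by exact_mod_cast Nat.lt_of_lt_of_le Nat.zero_lt_one hn1
    have hs : (0:ℝ) < (n:ℝ)^p := Real.rpow_pos_of_pos hnpos p
    have h2p : (n:ℝ)^(2*p) = ((n:ℝ)^p)^(2:ℕ) := by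
      rw [← Real.rpow_natCast ((n:ℝ)^p) 2, ← Real.rpow_mul hn0]
      congr 1
      push_cast
      ring
    simp only [shapedReLU, shapedReLU_eq']
    rw [gauss_norm_integral, gauss_K1_integral _ _ ρ hρ1 hρ2, ← hJ, h2p]
    have hDn' : ((1 + cp / (n:ℝ)^p + (1 + cm / (n:ℝ)^p))/2)^2
        + ((1 + cp / (n:ℝ)^p - (1 + cm / (n:ℝ)^p))/2)^2 ≠ 0 := hDn
    have hG_eq : G n = (cp - cm)^2/4 * (J - ρ)
        * (((1 + cp / (n:ℝ)^p + (1 + cm / (n:ℝ)^p))/2)^2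
          + ((1 + cp / (n:ℝ)^p - (1 + cm / (n:ℝ)^p))/2)^2)⁻¹ := rfl
    rw [hG_eq]
    set s : ℝ := (n:ℝ)^p with hs_def
    set A : ℝ := (1 + cp/s + (1 + cm/s))/2 with hA
    set B : ℝ := (1 + cp/s - (1 + cm/s))/2 with hB
    have h1 : (A^2+B^2)⁻¹ * (A^2+B^2) = 1 := inv_mul_cancel₀ hDn'
    have h2 : s^2 * B^2 = (cp-cm)^2/4 := by
      rw [hB]
      field_simp
      ring
    linear_combination (s^2*ρ) * h1 + ((J-ρ)*(A^2+B^2)⁻¹) * h2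
  refine Tendsto.congr' hEq.symm ?_
  rw [← hval]
  exact hG
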